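/- Let K be a linearly ordered field and let A and B be totally positive upper triangular n×n matrices over K of determinant one. Then for every k = 1, …, n−1: (A⁻¹)_{k,n} · ((B·A)⁻¹)_{k+1,n} − ((B·A)⁻¹)_{k,n} · (A⁻¹)_{k+1,n} > 0. -/

import Mathlib

open Matrix Finset
set_option linter.unusedSectionVars false

namespace TPUAux

variable {K : Type*} [Field K] [LinearOrder K] [IsStrictOrderedRing K]

lemma succAbove_val {q : ℕ} (p : Fin (q+1)) (i : Fin q) :
    ((p.succAbove i : Fin (q+1)) : ℕ) = if (i:ℕ) < (p:ℕ) then (i:ℕ) else (i:ℕ)+1 := by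
  rcases lt_or_ge (Fin.castSucc i) p with h | h
  · rw [Fin.succAbove_of_castSucc_lt _ _ h]
    have : (i:ℕ) < (p:ℕ) := h
    simp [this]
  · rw [Fin.succAbove_of_le_castSucc _ _ h]
    have : ¬ ((i:ℕ) < (p:ℕ)) := by
      have := (Fin.le_def.mp h); simp at this ⊢; omega
    simp [this]

lemma det_submatrix_zero {n p : ℕ} (A : Matrix (Fin n) (Fin n) K)
    (hA : ∀ i j : Fin n, j < i → A i j = 0)
    (r c : Fin p → Fin n) (hr : Monotone r) (hc : Monotone c)
    (t0 : Fin p) (h0 : c t0 < r t0) : (A.submatrix r c).det = 0 := by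
  rw [Matrix.det_apply]
  apply Finset.sum_eq_zero
  intro σ _
  have hex : ∃ i, i ≤ t0 ∧ t0 ≤ σ i := by
    by_contra hcon
    push_neg at hcon
    have hmap : ∀ i ∈ Finset.Iic t0, σ i ∈ Finset.Iio t0 := by
      intro i hi
      simp only [Finset.mem_Iic] at hi
      simpa only [Finset.mem_Iio] using hcon i hi
    have hcard := Finset.card_le_card_of_injOn σ hmap (σ.injective.injOn)
    rw [Fin.card_Iic, Fin.card_Iio] at hcard
    omega
  obtain ⟨i, hi1, hi2⟩ := hex
  have : ∏ x, (A.submatrix r c) (σ x) x = 0 := by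
    apply Finset.prod_eq_zero (Finset.mem_univ i)
    apply hA
    calc c i ≤ c t0 := hc hi1
      _ < r t0 := h0
      _ ≤ r (σ i) := hr hi2
  rw [this, smul_zero]

lemma det_updateCol_finsum {n : ℕ} (M : Matrix (Fin n) (Fin n) K) (j : Fin n)
    {ι : Type*} [DecidableEq ι] (s : Finset ι) (f : ι → Fin n → K) :
    (M.updateCol j (fun i => ∑ a ∈ s, f a i)).det
      = ∑ a ∈ s, (M.updateCol j (f a)).det := by
  induction s using Finset.induction with
  | empty =>
      simp only [Finset.sum_empty]
      exact Matrix.det_eq_zero_of_column_eq_zero j (fun i => by simp)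
  | @insert a s ha ih =>
      simp only [Finset.sum_insert ha]
      have : (M.updateCol j fun i => f a i + ∑ x ∈ s, f x i)
          = M.updateCol j (f a + fun i => ∑ x ∈ s, f x i) := rfl
      rw [this, Matrix.det_updateCol_add, ih]

lemma updateCol_comm {n : ℕ} (M : Matrix (Fin n) (Fin n) K) {j1 j2 : Fin n}
    (h : j1 ≠ j2) (u v : Fin n → K) :
    (M.updateCol j1 u).updateCol j2 v = (M.updateCol j2 v).updateCol j1 u := by
  ext i j
  simp only [Matrix.updateCol_apply]
  rcases eq_or_ne j j1 with rfl | h1 <;> rcases eq_or_ne j j2 with rfl | h2 <;>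
    simp_all

lemma det_one_update_pair {n : ℕ} (i1 i2 : Fin n) (h12 : i1 ≠ i2) (u v : Fin n → K) :
    (((1 : Matrix (Fin n) (Fin n) K).updateCol i1 u).updateCol i2 v).det
      = u i1 * v i2 - u i2 * v i1 := by
  -- base determinants
  set X : Fin n → Fin n → Matrix (Fin n) (Fin n) K :=
    fun a b => ((1 : Matrix (Fin n) (Fin n) K).updateCol i2 (Pi.single b 1)).updateCol i1
      (Pi.single a 1) with hX
  have hXapply : ∀ a b i j, X a b i j =
      if j = i1 then (Pi.single a (1:K) : Fin n → K) i else if j = i2 then (Pi.single b (1:K) : Fin n → K) i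
        else (1 : Matrix (Fin n) (Fin n) K) i j := by
    intro a b i j
    simp [hX, Matrix.updateCol_apply]
  have hd0a : ∀ a b : Fin n, a ≠ i1 → a ≠ i2 → (X a b).det = 0 := by
    intro a b ha1 ha2
    apply Matrix.det_zero_of_column_eq ha1.symm
    intro i
    rw [hXapply, hXapply]
    simp [ha1, ha2, Matrix.one_apply, Pi.single_apply, eq_comm]
  have hd0b : ∀ a b : Fin n, b ≠ i1 → b ≠ i2 → (X a b).det = 0 := by
    intro a b hb1 hb2
    apply Matrix.det_zero_of_column_eq hb2.symm
    intro i
    rw [hXapply, hXapply]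
    simp [hb1, hb2, h12.symm, Matrix.one_apply, Pi.single_apply, eq_comm]
  have hdaa : ∀ a : Fin n, (X a a).det = 0 := by
    intro a
    apply Matrix.det_zero_of_column_eq h12
    intro i
    rw [hXapply, hXapply]
    simp [h12.symm]
  have hd12 : (X i1 i2).det = 1 := by
    have : X i1 i2 = 1 := by
      ext i j
      rw [hXapply]
      rcases eq_or_ne j i1 with rfl | h1
      · simp [Matrix.one_apply, Pi.single_apply, eq_comm]
      · rcases eq_or_ne j i2 with rfl | h2
        · simp [h1, Matrix.one_apply, Pi.single_apply, eq_comm]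
        · simp [h1, h2]
    rw [this, Matrix.det_one]
  have hd21 : (X i2 i1).det = -1 := by
    have : X i2 i1 = (1 : Matrix (Fin n) (Fin n) K).submatrix id (Equiv.swap i1 i2) := by
      ext i j
      rw [hXapply]
      rcases eq_or_ne j i1 with rfl | h1
      · simp [Equiv.swap_apply_left, Matrix.one_apply, Pi.single_apply, eq_comm]
      · rcases eq_or_ne j i2 with rfl | h2
        · simp [h1, Equiv.swap_apply_right, Matrix.one_apply, Pi.single_apply, eq_comm]
        · simp only [Matrix.submatrix_apply, if_neg h1, if_neg h2]
          rw [Equiv.swap_apply_of_ne_of_ne h1 h2]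
          rfl
    rw [this, Matrix.det_permute', Equiv.Perm.sign_swap h12]
    simp
  -- expand v
  have hv : v = fun i => ∑ b, v b * (Pi.single b (1:K) : Fin n → K) i := by
    funext i
    simp [Pi.single_apply, mul_ite, Finset.sum_ite_eq]
  have step1 : (((1 : Matrix (Fin n) (Fin n) K).updateCol i1 u).updateCol i2 v).det
      = ∑ b, v b * ∑ a, u a * (X a b).det := by
    conv_lhs => rw [hv]
    rw [det_updateCol_finsum]
    refine Finset.sum_congr rfl fun b _ => ?_
    have : (fun i => v b * (Pi.single b (1:K) : Fin n → K) i) = v b • (Pi.single b (1:K) : Fin n → K) := rfl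
    rw [this, Matrix.det_updateCol_smul]
    congr 1
    rw [updateCol_comm _ h12]
    have hu : u = fun i => ∑ a, u a * (Pi.single a (1:K) : Fin n → K) i := by
      funext i
      simp [Pi.single_apply, mul_ite, Finset.sum_ite_eq]
    conv_lhs => rw [hu]
    rw [det_updateCol_finsum]
    refine Finset.sum_congr rfl fun a _ => ?_
    have : (fun i => u a * (Pi.single a (1:K) : Fin n → K) i) = u a • (Pi.single a (1:K) : Fin n → K) := rfl
    rw [this, Matrix.det_updateCol_smul]
  rw [step1]
  have houter : ∀ b ∈ (Finset.univ : Finset (Fin n)), b ∉ ({i1, i2} : Finset (Fin n)) →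
      v b * ∑ a, u a * (X a b).det = 0 := by
    intro b _ hb
    simp only [Finset.mem_insert, Finset.mem_singleton, not_or] at hb
    have : ∀ a, u a * (X a b).det = 0 := fun a => by rw [hd0b a b hb.1 hb.2, mul_zero]
    simp [this]
  rw [← Finset.sum_subset (Finset.subset_univ ({i1, i2} : Finset (Fin n))) houter,
    Finset.sum_pair h12]
  have hb1 : ∑ a, u a * (X a i1).det = u i2 * (-1) := by
    rw [Finset.sum_eq_single i2]
    · rw [hd21]
    · intro a _ ha
      rcases eq_or_ne a i1 with rfl | ha1
      · rw [hdaa, mul_zero]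
      · rw [hd0a a i1 ha1 ha, mul_zero]
    · intro h; exact absurd (Finset.mem_univ i2) h
  have hb2 : ∑ a, u a * (X a i2).det = u i1 * 1 := by
    rw [Finset.sum_eq_single i1]
    · rw [hd12]
    · intro a _ ha
      rcases eq_or_ne a i2 with rfl | ha2
      · rw [hdaa, mul_zero]
      · rw [hd0a a i2 ha ha2, mul_zero]
    · intro h; exact absurd (Finset.mem_univ i1) h
  rw [hb1, hb2]
  ring

lemma det_updateCol_single {q : ℕ} (M : Matrix (Fin (q+1)) (Fin (q+1)) K)
    (i j : Fin (q+1)) :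
    (M.updateCol j (Pi.single i 1)).det
      = (-1) ^ ((i:ℕ) + (j:ℕ)) * (M.submatrix i.succAbove j.succAbove).det := by
  rw [← Matrix.det_transpose (M.updateCol j (Pi.single i 1)), ← Matrix.updateRow_transpose,
    ← Matrix.adjugate_apply, Matrix.adjugate_fin_succ_eq_det_submatrix,
    ← Matrix.transpose_submatrix, Matrix.det_transpose, add_comm]

lemma submatrix_updateCol {n q : ℕ} (M : Matrix (Fin n) (Fin n) K)
    (r c : Fin q → Fin n) (hc : Function.Injective c)
    (j : Fin q) (w : Fin n → K) :
    (M.updateCol (c j) w).submatrix r c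
      = (M.submatrix r c).updateCol j (fun i => w (r i)) := by
  ext i j'
  simp only [Matrix.submatrix_apply, Matrix.updateCol_apply, hc.eq_iff]

lemma mul_updateCol {n : ℕ} (M X : Matrix (Fin n) (Fin n) K) (j : Fin n) (w : Fin n → K) :
    M * (X.updateCol j w) = (M * X).updateCol j (M *ᵥ w) := by
  ext i j'
  rcases eq_or_ne j' j with rfl | h
  · simp [Matrix.mul_apply, Matrix.updateCol_apply, Matrix.mulVec, dotProduct]
  · simp [Matrix.mul_apply, Matrix.updateCol_apply, h]

end TPUAux

/-- An upper triangular matrix is totally positive upper triangular if every minor on rows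
`i₁ < … < i_p` and columns `j₁ < … < j_p` with `i_k ≤ j_k` for all `k` is strictly positive. -/
def IsTotallyPositiveUpper {K : Type*} [Field K] [LinearOrder K] [IsStrictOrderedRing K] {n : ℕ}
    (A : Matrix (Fin n) (Fin n) K) : Prop :=
  (∀ i j : Fin n, j < i → A i j = 0) ∧
  ∀ (p : ℕ) (r c : Fin p → Fin n), StrictMono r → StrictMono c → (∀ k, r k ≤ c k) →
    0 < (A.submatrix r c).det

namespace TPUAux

lemma val_R {p : ℕ} (a : Fin (p+2)) (ha : (a:ℕ) = p+1) (b : Fin (p+1)) (t : Fin p) :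
    ((a.succAbove (b.succAbove t)) : ℕ) = if (t:ℕ) < (b:ℕ) then (t:ℕ) else (t:ℕ)+1 := by
  rw [succAbove_val, succAbove_val, ha]
  have h1 := t.isLt
  have h2 := b.isLt
  split_ifs <;> omega

lemma val_C {p : ℕ} (a : Fin (p+2)) (b : Fin (p+1)) (ha : (a:ℕ) = (b:ℕ)+1) (t : Fin p) :
    ((a.succAbove (b.succAbove t)) : ℕ) = if (t:ℕ) < (b:ℕ) then (t:ℕ) else (t:ℕ)+2 := by
  rw [succAbove_val, succAbove_val, ha]
  split_ifs <;> omega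

lemma main_aux {K : Type*} [Field K] [LinearOrder K] [IsStrictOrderedRing K] {p k : ℕ} (hkp : k ≤ p)
    (A B : Matrix (Fin (p+2)) (Fin (p+2)) K)
    (hA : IsTotallyPositiveUpper A) (hB : IsTotallyPositiveUpper B)
    (hA1 : A.det = 1) (hB1 : B.det = 1)
    (Kf K1 Nn : Fin (p+2)) (hKf : (Kf:ℕ) = k) (hK1 : (K1:ℕ) = k+1) (hNn : (Nn:ℕ) = p+1) :
    0 < A⁻¹ Kf Nn * (B * A)⁻¹ K1 Nn - (B * A)⁻¹ Kf Nn * A⁻¹ K1 Nn := by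
  have hAdet : IsUnit A.det := by rw [hA1]; exact isUnit_one
  have hiA : A⁻¹ * A = 1 := Matrix.nonsing_inv_mul A hAdet
  have hAinvdet : A⁻¹.det = 1 := by rw [Matrix.det_nonsing_inv, hA1, Ring.inverse_one]
  have hBinv : B⁻¹ = B.adjugate := by rw [Matrix.inv_def, hB1, Ring.inverse_one, one_smul]
  have hKfK1 : Kf ≠ K1 := by
    intro h; rw [Fin.ext_iff, hKf, hK1] at h; omega
  -- decomposition of the goal as a sum
  have hdecomp : A⁻¹ Kf Nn * (B * A)⁻¹ K1 Nn - (B * A)⁻¹ Kf Nn * A⁻¹ K1 Nn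
      = ∑ m : Fin (p+2), B⁻¹ m Nn *
          (A⁻¹ Kf Nn * A⁻¹ K1 m - A⁻¹ Kf m * A⁻¹ K1 Nn) := by
    rw [Matrix.mul_inv_rev]
    simp only [Matrix.mul_apply]
    rw [Finset.mul_sum, Finset.sum_mul, ← Finset.sum_sub_distrib]
    exact Finset.sum_congr rfl fun m _ => by ring
  rw [hdecomp]
  -- the 2x2 bracket as a determinant
  have hT : ∀ m : Fin (p+2),
      A⁻¹ Kf Nn * A⁻¹ K1 m - A⁻¹ Kf m * A⁻¹ K1 Nn
        = - ((A.updateCol Kf (Pi.single m 1)).updateCol K1 (Pi.single Nn 1)).det := by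
    intro m
    have hprod : A⁻¹ * ((A.updateCol Kf (Pi.single m 1)).updateCol K1 (Pi.single Nn 1))
        = (((1 : Matrix (Fin (p+2)) (Fin (p+2)) K).updateCol Kf
            (fun i => A⁻¹ i m)).updateCol K1 (fun i => A⁻¹ i Nn)) := by
      rw [mul_updateCol, mul_updateCol, hiA, Matrix.mulVec_single_one, Matrix.mulVec_single_one]
      rfl
    have hdet := congrArg Matrix.det hprod
    rw [Matrix.det_mul, hAinvdet, one_mul, det_one_update_pair Kf K1 hKfK1] at hdet
    rw [hdet]; ring
  -- value of the determinant for m ≠ Nn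
  have hDval : ∀ (m : Fin (p+2)) (hm : (m:ℕ) < p+1),
      ((A.updateCol Kf (Pi.single m 1)).updateCol K1 (Pi.single Nn 1)).det
        = (-1 : K) ^ ((p+1) + (k+1)) * ((-1 : K) ^ ((m:ℕ) + k) *
            (A.submatrix (Nn.succAbove ∘ (⟨(m:ℕ), hm⟩ : Fin (p+1)).succAbove)
              (K1.succAbove ∘ (⟨k, Nat.lt_succ_of_le hkp⟩ : Fin (p+1)).succAbove)).det) := by
    intro m hm
    rw [det_updateCol_single, hNn, hK1]
    congr 1
    have hj2 : K1.succAbove (⟨k, Nat.lt_succ_of_le hkp⟩ : Fin (p+1)) = Kf := by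
      apply Fin.ext
      rw [succAbove_val, hK1, hKf]
      simp
    rw [← hj2, submatrix_updateCol A _ _ (Fin.succAbove_right_injective)]
    have hcol : (fun i => (Pi.single m (1:K) : Fin (p+2) → K) (Nn.succAbove i))
        = (Pi.single (⟨(m:ℕ), hm⟩ : Fin (p+1)) (1:K) : Fin (p+1) → K) := by
      funext i
      have hval : ((Nn.succAbove i : Fin (p+2)) : ℕ) = (i:ℕ) := by
        rw [succAbove_val, hNn]
        simp [i.isLt]
      simp only [Pi.single_apply]
      by_cases h : i = (⟨(m:ℕ), hm⟩ : Fin (p+1))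
      · rw [if_pos h, if_pos]
        apply Fin.ext
        rw [hval, h]
      · rw [if_neg h, if_neg]
        intro hc
        exact h (Fin.ext (by rw [← hval, hc]))
    rw [hcol, det_updateCol_single, Matrix.submatrix_submatrix]
  -- positivity of the B-minors
  have hβ : ∀ m : Fin (p+2), 0 < (B.submatrix Nn.succAbove m.succAbove).det := by
    intro m
    apply hB.2 (p+1) _ _ (Fin.strictMono_succAbove Nn) (Fin.strictMono_succAbove m)
    intro t
    rw [Fin.le_def, succAbove_val, succAbove_val, hNn]
    have := t.isLt
    split_ifs <;> omega
  -- positivity / vanishing of the A-minors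
  have hMpos : ∀ (m : Fin (p+2)) (hm : (m:ℕ) < p+1), k ≤ (m:ℕ) →
      0 < (A.submatrix (Nn.succAbove ∘ (⟨(m:ℕ), hm⟩ : Fin (p+1)).succAbove)
              (K1.succAbove ∘ (⟨k, Nat.lt_succ_of_le hkp⟩ : Fin (p+1)).succAbove)).det := by
    intro m hm hkm
    apply hA.2 p _ _
      ((Fin.strictMono_succAbove Nn).comp (Fin.strictMono_succAbove _))
      ((Fin.strictMono_succAbove K1).comp (Fin.strictMono_succAbove _))
    intro t
    rw [Fin.le_def]
    simp only [Function.comp_apply]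
    rw [val_R Nn hNn, val_C K1 _ (by simp [hK1])]
    split_ifs <;> simp_all <;> omega
  have hMzero : ∀ (m : Fin (p+2)) (hm : (m:ℕ) < p+1), (m:ℕ) < k →
      (A.submatrix (Nn.succAbove ∘ (⟨(m:ℕ), hm⟩ : Fin (p+1)).succAbove)
              (K1.succAbove ∘ (⟨k, Nat.lt_succ_of_le hkp⟩ : Fin (p+1)).succAbove)).det = 0 := by
    intro m hm hmk
    have hmp : (m:ℕ) < p := by omega
    apply det_submatrix_zero A hA.1 _ _
      (((Fin.strictMono_succAbove Nn).comp (Fin.strictMono_succAbove _)).monotone)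
      (((Fin.strictMono_succAbove K1).comp (Fin.strictMono_succAbove _)).monotone)
      (⟨(m:ℕ), hmp⟩ : Fin p)
    rw [Fin.lt_def]
    simp only [Function.comp_apply]
    rw [val_R Nn hNn, val_C K1 _ (by simp [hK1])]
    simp [hmk]
  -- per-term analysis
  have key : ∀ m : Fin (p+2),
      0 ≤ B⁻¹ m Nn * (A⁻¹ Kf Nn * A⁻¹ K1 m - A⁻¹ Kf m * A⁻¹ K1 Nn) ∧
      ((m:ℕ) = k → 0 < B⁻¹ m Nn * (A⁻¹ Kf Nn * A⁻¹ K1 m - A⁻¹ Kf m * A⁻¹ K1 Nn)) := by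
    intro m
    by_cases hm : (m:ℕ) < p+1
    · have hF : B⁻¹ m Nn * (A⁻¹ Kf Nn * A⁻¹ K1 m - A⁻¹ Kf m * A⁻¹ K1 Nn)
          = (B.submatrix Nn.succAbove m.succAbove).det *
            (A.submatrix (Nn.succAbove ∘ (⟨(m:ℕ), hm⟩ : Fin (p+1)).succAbove)
              (K1.succAbove ∘ (⟨k, Nat.lt_succ_of_le hkp⟩ : Fin (p+1)).succAbove)).det := by
        rw [hT m, hDval m hm, hBinv, Matrix.adjugate_fin_succ_eq_det_submatrix, hNn]
        have : (-1 : K) ^ ((p+1) + (m:ℕ)) * (-1 : K) ^ ((p+1) + (k+1)) *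
            (-1 : K) ^ ((m:ℕ) + k) * (-1 : K) = 1 := by
          have h1 : ((-1 : K) ^ (((p+1) + (m:ℕ)) + ((p+1) + (k+1)) + ((m:ℕ) + k) + 1)) = 1 := by
            apply Even.neg_one_pow
            rw [Nat.even_iff]
            omega
          rw [pow_add, pow_add, pow_add, pow_one] at h1
          exact h1
        calc (-1 : K) ^ ((p+1) + (m:ℕ)) * (B.submatrix Nn.succAbove m.succAbove).det *
              -((-1 : K) ^ ((p+1) + (k+1)) * ((-1 : K) ^ ((m:ℕ) + k) *
                (A.submatrix (Nn.succAbove ∘ (⟨(m:ℕ), hm⟩ : Fin (p+1)).succAbove)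
                  (K1.succAbove ∘ (⟨k, Nat.lt_succ_of_le hkp⟩ : Fin (p+1)).succAbove)).det))
            = ((-1 : K) ^ ((p+1) + (m:ℕ)) * (-1 : K) ^ ((p+1) + (k+1)) *
                (-1 : K) ^ ((m:ℕ) + k) * (-1 : K)) *
              ((B.submatrix Nn.succAbove m.succAbove).det *
                (A.submatrix (Nn.succAbove ∘ (⟨(m:ℕ), hm⟩ : Fin (p+1)).succAbove)
                  (K1.succAbove ∘ (⟨k, Nat.lt_succ_of_le hkp⟩ : Fin (p+1)).succAbove)).det) := by ring
          _ = _ := by rw [this, one_mul]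
      constructor
      · rw [hF]
        rcases le_or_gt k (m:ℕ) with hkm | hkm
        · exact le_of_lt (mul_pos (hβ m) (hMpos m hm hkm))
        · rw [hMzero m hm hkm, mul_zero]
      · intro hmk
        rw [hF]
        exact mul_pos (hβ m) (hMpos m hm (le_of_eq hmk.symm))
    · have hmNn : m = Nn := Fin.ext (by omega)
      constructor
      · rw [hmNn, sub_self, mul_zero]
      · intro hmk; omega
  apply Finset.sum_pos' (fun m _ => (key m).1)
  exact ⟨Kf, Finset.mem_univ _, (key Kf).2 hKf⟩

end TPUAux

/-- For totally positive upper triangular matrices `A`, `B` of determinant one,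
`(A⁻¹)_{k,n} · ((BA)⁻¹)_{k+1,n} − ((BA)⁻¹)_{k,n} · (A⁻¹)_{k+1,n} > 0`. -/
theorem inv_lastCol_twoByTwo_pos_of_totallyPositiveUpper
    {K : Type*} [Field K] [LinearOrder K] [IsStrictOrderedRing K] {n : ℕ}
    (A B : Matrix (Fin n) (Fin n) K)
    (hA : IsTotallyPositiveUpper A) (hB : IsTotallyPositiveUpper B)
    (hA1 : A.det = 1) (hB1 : B.det = 1)
    (k : ℕ) (hk : k + 1 < n) :
    0 < A⁻¹ ⟨k, by omega⟩ ⟨n - 1, by omega⟩ * (B * A)⁻¹ ⟨k + 1, hk⟩ ⟨n - 1, by omega⟩ -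
      (B * A)⁻¹ ⟨k, by omega⟩ ⟨n - 1, by omega⟩ * A⁻¹ ⟨k + 1, hk⟩ ⟨n - 1, by omega⟩ := by
  obtain ⟨p, rfl⟩ : ∃ p, n = p + 2 := ⟨n - 2, by omega⟩
  have h1 : k < p + 2 := by omega
  have h2 : k + 1 < p + 2 := by omega
  have h3 : p + 1 < p + 2 := by omega
  exact TPUAux.main_aux (p := p) (k := k) (by omega) A B hA hB hA1 hB1 ⟨k, h1⟩ ⟨k + 1, h2⟩ ⟨p + 1, h3⟩ rfl rfl rfl
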